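/- Let (x_j)_{j=1}^N be a finite frame for ℂ^M with lower frame bound A and upper frame bound B, and let U_X be its N×M analysis matrix, whose j-th row is x_j (so entry (j,k) is the k-th coordinate of x_j in an orthonormal basis). Let c_1,...,c_M ∈ ℂ^N be the columns of U_X. Then (c_k)_{k=1}^M spans the column space of U_X, and it is a frame for the column space with lower frame bound A and upper frame bound B: for every y in the column space, A‖y‖² ≤ Σ_{k=1}^M |⟨y, c_k⟩|² ≤ B‖y‖² (and the upper inequality holds for all y ∈ ℂ^N). -/

import Mathlib

open scoped ComplexInnerProductSpace

private lemma col_norm_sq_eq {n : ℕ} (y : EuclideanSpace ℂ (Fin n)) :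
    ‖y‖ ^ 2 = ∑ i, ‖y i‖ ^ 2 := by
  rw [EuclideanSpace.norm_eq, Real.sq_sqrt]; positivity

private lemma col_mul_star (u : ℂ) : u * star u = ((‖u‖ ^ 2 : ℝ) : ℂ) := by
  have h : u * star u = u * (starRingEnd ℂ) u := rfl
  rw [h, Complex.mul_conj, Complex.normSq_eq_norm_sq]

theorem columns_of_analysis_matrix
    (M N : ℕ) (x : Fin N → EuclideanSpace ℂ (Fin M))
    (A B : ℝ) (hA : 0 < A) (hAB : A ≤ B)
    (hframe : ∀ v : EuclideanSpace ℂ (Fin M),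
      A * ‖v‖ ^ 2 ≤ ∑ j, ‖⟪v, x j⟫‖ ^ 2 ∧ ∑ j, ‖⟪v, x j⟫‖ ^ 2 ≤ B * ‖v‖ ^ 2)
    (U : Matrix (Fin N) (Fin M) ℂ) (hU : ∀ j k, U j k = x j k)
    (c : Fin M → EuclideanSpace ℂ (Fin N)) (hc : ∀ k j, c k j = x j k) :
    ((Submodule.span ℂ (Set.range c) : Set (EuclideanSpace ℂ (Fin N))) =
      {y : EuclideanSpace ℂ (Fin N) | ∃ v : Fin M → ℂ, ∀ j, y j = ∑ k, U j k * v k}) ∧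
    (∀ y ∈ Submodule.span ℂ (Set.range c),
      A * ‖y‖ ^ 2 ≤ ∑ k, ‖⟪y, c k⟫‖ ^ 2) ∧
    (∀ y : EuclideanSpace ℂ (Fin N), ∑ k, ‖⟪y, c k⟫‖ ^ 2 ≤ B * ‖y‖ ^ 2) := by
  classical
  set T : EuclideanSpace ℂ (Fin M) → EuclideanSpace ℂ (Fin N) :=
    fun w => WithLp.toLp 2 (fun j => ∑ k, U j k * w k) with hT_def
  have hTapp : ∀ (w : EuclideanSpace ℂ (Fin M)) j, T w j = ∑ k, U j k * w k :=
    fun w j => rfl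
  -- frame bounds transfer: A‖w‖² ≤ ‖Tw‖² ≤ B‖w‖²
  have hT : ∀ w : EuclideanSpace ℂ (Fin M),
      A * ‖w‖ ^ 2 ≤ ‖T w‖ ^ 2 ∧ ‖T w‖ ^ 2 ≤ B * ‖w‖ ^ 2 := by
    intro w
    set v : EuclideanSpace ℂ (Fin M) := WithLp.toLp 2 (fun k => star (w k)) with hv_def
    have hv := hframe v
    have h1 : ∀ j, ⟪v, x j⟫ = T w j := by
      intro j
      simp only [PiLp.inner_apply, RCLike.inner_apply, hTapp, hU]
      refine Finset.sum_congr rfl fun k _ => ?_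
      simp [hv_def, mul_comm]
    have h2 : ‖v‖ ^ 2 = ‖w‖ ^ 2 := by
      simp [col_norm_sq_eq, hv_def]
    have h3 : ‖T w‖ ^ 2 = ∑ j, ‖⟪v, x j⟫‖ ^ 2 := by
      rw [col_norm_sq_eq]
      exact Finset.sum_congr rfl fun j _ => by rw [h1]
    rw [h2, ← h3] at hv
    exact hv
  -- membership in span ↔ in column space
  have hmem : ∀ y : EuclideanSpace ℂ (Fin N),
      y ∈ Submodule.span ℂ (Set.range c) ↔ ∃ w : EuclideanSpace ℂ (Fin M), T w = y := by
    intro y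
    rw [Submodule.mem_span_range_iff_exists_fun]
    constructor
    · rintro ⟨w, hw⟩
      refine ⟨WithLp.toLp 2 w, ?_⟩
      refine PiLp.ext fun j => ?_
      rw [← hw]
      simp only [hTapp]
      rw [WithLp.ofLp_sum, Finset.sum_apply]
      exact Finset.sum_congr rfl fun k _ => by simp [hU, hc, mul_comm]
    · rintro ⟨w, hw⟩
      refine ⟨w.ofLp, ?_⟩
      refine PiLp.ext fun j => ?_
      rw [← hw]
      simp only [hTapp]
      rw [WithLp.ofLp_sum, Finset.sum_apply]
      exact Finset.sum_congr rfl fun k _ => by simp [hU, hc, mul_comm]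
  -- ⟪y, T w⟫ = ∑ k, w k * ⟪y, c k⟫
  have hinner : ∀ (y : EuclideanSpace ℂ (Fin N)) (w : EuclideanSpace ℂ (Fin M)),
      ⟪y, T w⟫ = ∑ k, w k * ⟪y, c k⟫ := by
    intro y w
    simp only [PiLp.inner_apply, RCLike.inner_apply, hTapp, Finset.mul_sum, Finset.sum_mul]
    rw [Finset.sum_comm]
    refine Finset.sum_congr rfl fun k _ => Finset.sum_congr rfl fun j _ => ?_
    rw [hU, ← hc]; ring
  refine ⟨?_, ?_, ?_⟩
  · ext y
    simp only [SetLike.mem_coe, Set.mem_setOf_eq, hmem]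
    constructor
    · rintro ⟨w, hw⟩; exact ⟨w.ofLp, fun j => by rw [← hw]⟩
    · rintro ⟨w, hw⟩; exact ⟨WithLp.toLp 2 w, PiLp.ext fun j => (hw j).symm⟩
  · -- lower frame bound on the span
    intro y hy
    obtain ⟨w, hw⟩ := (hmem y).mp hy
    by_cases hy0 : y = 0
    · subst hy0; simp
    set z : EuclideanSpace ℂ (Fin M) := WithLp.toLp 2 (fun k => ⟪y, c k⟫) with hz_def
    set w' : EuclideanSpace ℂ (Fin M) := WithLp.toLp 2 (fun k => star (w k)) with hw'_def
    have hzsum : ∑ k, ‖⟪y, c k⟫‖ ^ 2 = ‖z‖ ^ 2 := by rw [col_norm_sq_eq]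
    have hw'sq : ‖w'‖ ^ 2 = ‖w‖ ^ 2 := by simp [col_norm_sq_eq, hw'_def]
    have hiw : ⟪w', z⟫ = ⟪y, y⟫ := by
      have hyTw : ⟪y, T w⟫ = ⟪y, y⟫ := by rw [hw]
      rw [hinner] at hyTw
      rw [← hyTw]
      simp only [PiLp.inner_apply, RCLike.inner_apply, hw'_def, hz_def]
      simp
      exact Finset.sum_congr rfl fun k _ => mul_comm _ _
    have h1 : ‖y‖ ^ 2 ≤ ‖w'‖ * ‖z‖ := by
      have hcs := norm_inner_le_norm (𝕜 := ℂ) w' z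
      rw [hiw] at hcs
      have hyy : ‖⟪y, y⟫‖ = ‖y‖ ^ 2 := by
        rw [inner_self_eq_norm_sq_to_K]; simp [sq]
      rwa [hyy] at hcs
    have h2 : A * ‖w'‖ ^ 2 ≤ ‖y‖ ^ 2 := by
      have := (hT w).1
      rw [hw] at this
      rwa [hw'sq]
    rw [hzsum]
    have hy' : 0 < ‖y‖ := norm_pos_iff.mpr hy0
    have hsq : ‖y‖ ^ 2 * ‖y‖ ^ 2 ≤ (‖w'‖ * ‖z‖) * (‖w'‖ * ‖z‖) :=
      mul_le_mul h1 h1 (by positivity) (by positivity)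
    nlinarith [norm_nonneg z, norm_nonneg w', mul_pos hy' hy',
      mul_le_mul_of_nonneg_right h2 (sq_nonneg ‖z‖)]
  · -- upper frame bound everywhere
    intro y
    set z : EuclideanSpace ℂ (Fin M) := WithLp.toLp 2 (fun k => ⟪y, c k⟫) with hz_def
    set w : EuclideanSpace ℂ (Fin M) := WithLp.toLp 2 (fun k => star (z k)) with hw_def
    have hzsum : ∑ k, ‖⟪y, c k⟫‖ ^ 2 = ‖z‖ ^ 2 := by rw [col_norm_sq_eq]
    have hwsq : ‖w‖ ^ 2 = ‖z‖ ^ 2 := by simp [col_norm_sq_eq, hw_def]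
    have hiw : ⟪y, T w⟫ = ((‖z‖ ^ 2 : ℝ) : ℂ) := by
      rw [hinner]
      have hterm : ∀ k, w k * ⟪y, c k⟫ = ((‖z k‖ ^ 2 : ℝ) : ℂ) := by
        intro k
        have : w k * ⟪y, c k⟫ = z k * star (z k) := by
          simp only [hw_def, hz_def, PiLp.toLp_apply]; ring
        rw [this, col_mul_star]
      rw [Finset.sum_congr rfl fun k _ => hterm k, col_norm_sq_eq]
      push_cast
      ring
    have h1 : ‖z‖ ^ 2 ≤ ‖y‖ * ‖T w‖ := by
      have hcs := norm_inner_le_norm (𝕜 := ℂ) y (T w)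
      rw [hiw] at hcs
      calc ‖z‖ ^ 2 ≤ ‖((‖z‖ ^ 2 : ℝ) : ℂ)‖ := by simp
        _ ≤ ‖y‖ * ‖T w‖ := hcs
    have h2 : ‖T w‖ ^ 2 ≤ B * ‖z‖ ^ 2 := by
      have := (hT w).2; rwa [hwsq] at this
    rw [hzsum]
    rcases eq_or_lt_of_le (norm_nonneg z) with hz0 | hz'
    · rw [← hz0]
      have hB : 0 < B := lt_of_lt_of_le hA hAB
      norm_num
      positivity
    have hB : 0 < B := lt_of_lt_of_le hA hAB
    have hsq : ‖z‖ ^ 2 * ‖z‖ ^ 2 ≤ (‖y‖ * ‖T w‖) * (‖y‖ * ‖T w‖) :=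
      mul_le_mul h1 h1 (by positivity) (by positivity)
    nlinarith [norm_nonneg y, norm_nonneg (T w), mul_pos hz' hz',
      mul_le_mul_of_nonneg_left h2 (sq_nonneg ‖y‖)]
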